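/- In PSL(2,ℂ), the element m∞0 · (y · m∞2 · y⁻¹) has order 5 (i.e., the product of the parabolic fixing ∞ with translation length 1 and the conjugate by y of the parabolic with translation ω² is elliptic of order 5). -/

import Mathlib

/-!
Setup: `PSL(2,ℂ)` as the quotient of `SL(2,ℂ)` by its center, the constants
`u = (1+√5)/2`, `ω = (1+√(-3))/2 = (1+√3·i)/2`, and the generators of the
tetrahedral groups of Neumann–Reid.
-/

noncomputable section

abbrev SL2C := Matrix.SpecialLinearGroup (Fin 2) ℂ

/-- `PSL(2,ℂ)`, the quotient of `SL(2,ℂ)` by its center `{±I}`. -/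
abbrev PSL2C := SL2C ⧸ Subgroup.center SL2C

/-- The projection `SL(2,ℂ) → PSL(2,ℂ)`, `A ↦ [A]`. -/
def pr : SL2C →* PSL2C := QuotientGroup.mk' _

def u : ℂ := ((1 + Real.sqrt 5) / 2 : ℝ)
def ω : ℂ := (1 + Real.sqrt 3 * Complex.I) / 2

lemma u_ne : u ≠ 0 := Complex.ofReal_ne_zero.mpr (by positivity)

lemma ω_ne : ω ≠ 0 := by
  unfold ω
  intro h
  rw [div_eq_zero_iff] at h
  rcases h with h | h
  · have := congrArg Complex.re h
    simp at this
  · norm_num at h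

def ySL : SL2C := ⟨!![0, ω * u⁻¹; -ω⁻¹ * u, 0], by
  rw [Matrix.det_fin_two_of]; field_simp [u_ne, ω_ne]; ring⟩

def y : PSL2C := pr ySL

def minf0 : PSL2C := pr ⟨!![1, 1; 0, 1], by simp [Matrix.det_fin_two_of]⟩
def minf1 : PSL2C := pr ⟨!![1, ω; 0, 1], by simp [Matrix.det_fin_two_of]⟩
def minf2 : PSL2C := pr ⟨!![1, ω ^ 2; 0, 1], by simp [Matrix.det_fin_two_of]⟩

lemma hu_sq : u ^ 2 = u + 1 := by
  unfold u
  have h5 : Real.sqrt 5 ^ 2 = 5 := Real.sq_sqrt (by norm_num)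
  have h5' : ((Real.sqrt 5 : ℝ) : ℂ) ^ 2 = 5 := by exact_mod_cast congrArg Complex.ofReal h5
  push_cast
  linear_combination (1 / 4 : ℂ) * h5'

def BSL : SL2C := ⟨!![1, ω ^ 2; 0, 1], by simp [Matrix.det_fin_two_of]⟩

def CSL : SL2C := ⟨!![1, 0; -(u + 1), 1], by simp [Matrix.det_fin_two_of]⟩

lemma conj_eq : ySL * BSL * ySL⁻¹ = CSL := by
  rw [mul_inv_eq_iff_eq_mul]
  apply Subtype.ext
  rw [Matrix.SpecialLinearGroup.coe_mul, Matrix.SpecialLinearGroup.coe_mul]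
  show (!![0, ω * u⁻¹; -ω⁻¹ * u, 0] : Matrix (Fin 2) (Fin 2) ℂ) * !![1, ω ^ 2; 0, 1]
      = !![1, 0; -(u + 1), 1] * !![0, ω * u⁻¹; -ω⁻¹ * u, 0]
  ext i j
  fin_cases i <;> fin_cases j <;>
    simp [Matrix.mul_apply, Fin.sum_univ_two] <;>
    field_simp [u_ne, ω_ne] <;>
    first
      | linear_combination (ω ^ 2) * hu_sq
      | linear_combination (-2 * ω ^ 2) * hu_sq
      | linear_combination (2 * ω ^ 2) * hu_sq
      | linear_combination (-ω ^ 2) * hu_sq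
      | linear_combination (-1) * hu_sq

def ASL : SL2C := ⟨!![1, 1; 0, 1], by simp [Matrix.det_fin_two_of]⟩

def NSL : SL2C := ASL * CSL

lemma NSL_coe : (NSL : Matrix (Fin 2) (Fin 2) ℂ) = !![-u, 1; -(u + 1), 1] := by
  rw [NSL, Matrix.SpecialLinearGroup.coe_mul]
  show (!![1, 1; 0, 1] : Matrix (Fin 2) (Fin 2) ℂ) * !![1, 0; -(u + 1), 1] = _
  ext i j
  fin_cases i <;> fin_cases j <;>
    simp [Matrix.mul_apply, Fin.sum_univ_two]

lemma NSL_pow5 : NSL ^ 5 = -1 := by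
  have key : (!![-u, 1; -(u + 1), 1] : Matrix (Fin 2) (Fin 2) ℂ) ^ 5 = -1 := by
    ext i j
    fin_cases i <;> fin_cases j <;>
      simp [pow_succ, Matrix.mul_apply, Fin.sum_univ_two] <;> ring_nf
    · linear_combination (-2 + 3 * u ^ 2 - u ^ 3) * hu_sq
    · linear_combination (1 - 3 * u + u ^ 2) * hu_sq
    · linear_combination (-1 + 2 * u + 2 * u ^ 2 - u ^ 3) * hu_sq
    · linear_combination (-1 - 2 * u + u ^ 2) * hu_sq
  apply Subtype.ext
  rw [Matrix.SpecialLinearGroup.coe_pow, Matrix.SpecialLinearGroup.coe_neg,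
    Matrix.SpecialLinearGroup.coe_one, NSL_coe]
  exact key

/-- `m∞0 · (y · m∞2 · y⁻¹)` is elliptic of order 5. -/
theorem stmt6 : orderOf (minf0 * (y * minf2 * y⁻¹)) = 5 := by
  have hg : minf0 * (y * minf2 * y⁻¹) = pr NSL := by
    have : minf0 * (y * minf2 * y⁻¹) = pr (ASL * (ySL * BSL * ySL⁻¹)) := by
      simp only [map_mul, map_inv]
      rfl
    rw [this, conj_eq]; rfl
  rw [hg]
  have h5 : (pr NSL) ^ 5 = 1 := by
    rw [← map_pow, NSL_pow5]
    rw [pr, QuotientGroup.mk'_apply, QuotientGroup.eq_one_iff]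
    exact Subgroup.mem_center_iff.mpr fun B => by
      simp [neg_mul, mul_neg]
  have hne : pr NSL ≠ 1 := by
    intro h
    rw [pr, QuotientGroup.mk'_apply, QuotientGroup.eq_one_iff] at h
    obtain ⟨r, -, hr⟩ := Matrix.SpecialLinearGroup.mem_center_iff.mp h
    have h01 : (Matrix.scalar (Fin 2) r) 0 1 = (NSL : Matrix (Fin 2) (Fin 2) ℂ) 0 1 := by
      rw [hr]
    simp [NSL_coe, Matrix.scalar_apply] at h01
  haveI : Fact (Nat.Prime 5) := ⟨by norm_num⟩
  exact orderOf_eq_prime h5 hne
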